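/- Let T_A and T_B be commuting bounded C₀-semigroups on a Banach space X with generators A, B, both extending holomorphically to the right half-plane ℂ₊ with ‖T_A(ζ)‖, ‖T_B(ζ)‖ ≤ M|ζ|^m. If A − B is bounded, then for all z ∈ ℂ₊ and all x ∈ X: (T_A(z) − T_B(z))x = ∫_{[0,z]} T_B(z − s)(A − B)T_A(s)x ds (contour integral along the segment from 0 to z), and consequently ‖T_A(z) − T_B(z)‖ ≤ M²|z|^{2m+1}‖A − B‖. -/

import Mathlib

open MeasureTheory Filter Set

variable {X : Type*} [NormedAddCommGroup X] [NormedSpace ℂ X] [CompleteSpace X]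

/-- A (not necessarily bounded) one-parameter `C₀`-semigroup on `X`. -/
def IsC0 (T : ℝ → X →L[ℂ] X) : Prop :=
  T 0 = 1 ∧ (∀ s t : ℝ, 0 ≤ s → 0 ≤ t → T (s + t) = T s ∘L T t) ∧
    ∀ x : X, ContinuousOn (fun t => T t x) (Set.Ici 0)

/-- `A` (a partially defined linear map) is the infinitesimal generator of the
semigroup `T`: its domain is exactly the set of `x` for which the difference
quotient converges, and on the domain `A x` is its limit. -/
def IsGen (T : ℝ → X →L[ℂ] X) (A : X →ₗ.[ℂ] X) : Prop :=
  (∀ x : X, x ∈ A.domain ↔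
      ∃ y : X, Tendsto (fun t : ℝ => (t : ℂ)⁻¹ • (T t x - x)) (nhdsWithin 0 (Set.Ioi 0)) (nhds y)) ∧
    ∀ x : A.domain,
      Tendsto (fun t : ℝ => (t : ℂ)⁻¹ • (T t (x : X) - (x : X))) (nhdsWithin 0 (Set.Ioi 0)) (nhds (A x))

set_option linter.unusedSectionVars false

lemma aux_open : IsOpen {z : ℂ | 0 < z.re} := isOpen_lt continuous_const Complex.continuous_re

/-- evaluation of the complex derivative as a limit of real right difference quotients -/
lemma aux_slope {T : ℂ → X →L[ℂ] X} {T' : X →L[ℂ] X} {ζ : ℂ}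
    (h : HasDerivAt T T' ζ) (x : X) :
    Tendsto (fun t : ℝ => (t : ℂ)⁻¹ • (T (ζ + t) x - T ζ x)) (nhdsWithin 0 (Set.Ioi 0))
      (nhds (T' x)) := by
  have hs := hasDerivAt_iff_tendsto_slope.1 h
  have hmap : Tendsto (fun t : ℝ => ζ + (t : ℂ)) (nhdsWithin 0 (Set.Ioi 0))
      (nhdsWithin ζ {ζ}ᶜ) := by
    rw [tendsto_nhdsWithin_iff]
    constructor
    · have : Tendsto (fun t : ℝ => ζ + (t : ℂ)) (nhds 0) (nhds (ζ + (0:ℝ))) :=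
        (continuous_const.add (Complex.continuous_ofReal)).tendsto 0
      simpa using this.mono_left nhdsWithin_le_nhds
    · filter_upwards [self_mem_nhdsWithin] with t ht
      simp only [mem_compl_iff, mem_singleton_iff]
      intro hc
      have : (t:ℂ) = 0 := by linear_combination hc
      exact_mod_cast (ne_of_gt (mem_Ioi.1 ht)) (by exact_mod_cast this)
  have h2 := ((ContinuousLinearMap.apply ℂ X x).continuous.tendsto _).comp (hs.comp hmap)
  refine h2.congr' ?_
  filter_upwards [self_mem_nhdsWithin] with t ht
  simp only [Function.comp_apply, ContinuousLinearMap.apply_apply, slope,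
    vsub_eq_sub, add_sub_cancel_left, ContinuousLinearMap.smul_apply,
    ContinuousLinearMap.sub_apply]

/-- The semigroup maps into the domain of the generator, where the generator agrees
with the complex derivative. -/
lemma aux_mem_gen {T : ℂ → X →L[ℂ] X} {A : X →ₗ.[ℂ] X} {T' : X →L[ℂ] X}
    (hgen : IsGen (fun t : ℝ => T t) A)
    (hsg : ∀ z w : ℂ, 0 < z.re → 0 < w.re → T (z + w) = T z ∘L T w)
    {ζ : ℂ} (hζ : 0 < ζ.re) (hd : HasDerivAt T T' ζ) (x : X) :
    ∃ h : T ζ x ∈ A.domain, A ⟨T ζ x, h⟩ = T' x := by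
  have hten : Tendsto (fun t : ℝ => (t : ℂ)⁻¹ • (T t (T ζ x) - T ζ x))
      (nhdsWithin 0 (Set.Ioi 0)) (nhds (T' x)) := by
    refine (aux_slope hd x).congr' ?_
    filter_upwards [self_mem_nhdsWithin] with t ht
    have h2 : T (ζ + (t:ℂ)) = T t ∘L T ζ := by
      rw [add_comm]; exact hsg t ζ (by simpa using mem_Ioi.1 ht) hζ
    rw [h2]; rfl
  have hmem : T ζ x ∈ A.domain := (hgen.1 (T ζ x)).2 ⟨T' x, hten⟩
  refine ⟨hmem, ?_⟩
  exact tendsto_nhds_unique (hgen.2 ⟨T ζ x, hmem⟩) hten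

/-- The semigroup commutes with its generator, and composing with the generator gives
the complex derivative. -/
lemma aux_gen_commute {T : ℂ → X →L[ℂ] X} {B : X →ₗ.[ℂ] X} {T' : X →L[ℂ] X}
    (hgen : IsGen (fun t : ℝ => T t) B)
    (hsg : ∀ z w : ℂ, 0 < z.re → 0 < w.re → T (z + w) = T z ∘L T w)
    {w : ℂ} (hw : 0 < w.re) (hd : HasDerivAt T T' w) (y : B.domain) :
    T w (B y) = T' (y : X) := by
  have h1 : Tendsto (fun t : ℝ => (t : ℂ)⁻¹ • (T (w + t) (y:X) - T w (y:X)))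
      (nhdsWithin 0 (Set.Ioi 0)) (nhds (T' (y:X))) := aux_slope hd y
  have h2 : Tendsto (fun t : ℝ => (t : ℂ)⁻¹ • (T (w + t) (y:X) - T w (y:X)))
      (nhdsWithin 0 (Set.Ioi 0)) (nhds (T w (B y))) := by
    have h3 := ((T w).continuous.tendsto _).comp (hgen.2 y)
    refine h3.congr' ?_
    filter_upwards [self_mem_nhdsWithin] with t ht
    have hsg' : T (w + t) = T w ∘L T t := hsg w t hw (by simpa using mem_Ioi.1 ht)
    simp only [Function.comp_apply, hsg', ContinuousLinearMap.coe_comp']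
    rw [(T w).map_smul, (T w).map_sub]
  exact tendsto_nhds_unique h2 h1

lemma aux_key
    (TA TB : ℂ → X →L[ℂ] X)
    (hTAhol : DifferentiableOn ℂ TA {z : ℂ | 0 < z.re})
    (hTBhol : DifferentiableOn ℂ TB {z : ℂ | 0 < z.re})
    (hTAsg : ∀ z w : ℂ, 0 < z.re → 0 < w.re → TA (z + w) = TA z ∘L TA w)
    (hTBsg : ∀ z w : ℂ, 0 < z.re → 0 < w.re → TB (z + w) = TB z ∘L TB w)
    (A B : X →ₗ.[ℂ] X) (hA : IsGen (fun t : ℝ => TA t) A)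
    (hB : IsGen (fun t : ℝ => TB t) B) (hdom : A.domain = B.domain)
    (C : X →L[ℂ] X)
    (hC : ∀ x (hxA : x ∈ A.domain) (hxB : x ∈ B.domain),
      C x = A ⟨x, hxA⟩ - B ⟨x, hxB⟩)
    (z : ℂ) (hz : 0 < z.re) (δ : ℝ) (hδ : 0 < δ) (x : X) :
    TB δ (TA (z + δ) x) - TB (z + δ) (TA δ x)
      = z • ∫ t in (0:ℝ)..1, TB ((1 - t) • z + δ) (C (TA (t • z + δ) x)) := by
  have hre1 : ∀ t : ℝ, t ≤ 1 → 0 < ((1 - t) • z + (δ:ℂ)).re := by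
    intro t ht
    simp only [Complex.add_re, Complex.smul_re, Complex.ofReal_re, smul_eq_mul]
    nlinarith
  have hre2 : ∀ t : ℝ, 0 ≤ t → 0 < (t • z + (δ:ℂ)).re := by
    intro t ht
    simp only [Complex.add_re, Complex.smul_re, Complex.ofReal_re, smul_eq_mul]
    nlinarith
  have hderiv : ∀ t ∈ Icc (0:ℝ) 1,
      HasDerivAt (fun s : ℝ => TB ((1 - s) • z + δ) (TA (s • z + δ) x))
        (z • TB ((1 - t) • z + δ) (C (TA (t • z + δ) x))) t := by
    intro t ht
    have hw1 : 0 < ((1 - t) • z + (δ:ℂ)).re := hre1 t ht.2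
    have hw2 : 0 < (t • z + (δ:ℂ)).re := hre2 t ht.1
    have hdB : HasDerivAt TB (deriv TB ((1 - t) • z + δ)) ((1 - t) • z + δ) :=
      (hTBhol.differentiableAt (aux_open.mem_nhds hw1)).hasDerivAt
    have hdA : HasDerivAt TA (deriv TA (t • z + δ)) (t • z + δ) :=
      (hTAhol.differentiableAt (aux_open.mem_nhds hw2)).hasDerivAt
    have haff1 : HasDerivAt (fun s : ℝ => ((1 - s) • z + (δ:ℂ))) (-z) t := by
      have h0 : HasDerivAt (fun s : ℝ => (1 - s : ℝ)) (-1) t := by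
        simpa using (hasDerivAt_id t).const_sub 1
      simpa using (h0.smul_const z).add_const (δ:ℂ)
    have haff2 : HasDerivAt (fun s : ℝ => (s • z + (δ:ℂ))) z t := by
      simpa using ((hasDerivAt_id t).smul_const z).add_const (δ:ℂ)
    have hB' : HasDerivAt (fun s : ℝ => TB ((1 - s) • z + δ))
        ((-z) • deriv TB ((1 - t) • z + δ)) t := by
      simpa [Function.comp_def] using
        (HasDerivAt.scomp_of_eq (x := t) hdB haff1 rfl)
    have hA' : HasDerivAt (fun s : ℝ => TA (s • z + δ))
        (z • deriv TA (t • z + δ)) t := by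
      simpa [Function.comp_def] using
        (HasDerivAt.scomp_of_eq (x := t) hdA haff2 rfl)
    have hu : HasDerivAt (fun s : ℝ => TA (s • z + δ) x)
        ((z • deriv TA (t • z + δ)) x) t := by
      have := ((ContinuousLinearMap.apply ℂ X x).restrictScalars ℝ).hasFDerivAt.comp_hasDerivAt
        t hA'
      simpa [Function.comp_def] using this
    have hBr : HasDerivAt (fun s : ℝ => ((TB ((1 - s) • z + δ)).restrictScalars ℝ))
        (((-z) • deriv TB ((1 - t) • z + δ)).restrictScalars ℝ) t := by
      have := (ContinuousLinearMap.restrictScalarsL ℂ X X ℝ ℝ).hasFDerivAt.comp_hasDerivAt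
        t hB'
      simpa [Function.comp_def] using this
    have hF := hBr.clm_apply hu
    obtain ⟨hy, hAy⟩ := aux_mem_gen hA hTAsg hw2 hdA x
    have hyB : TA (t • z + δ) x ∈ B.domain := hdom ▸ hy
    have hBcomm : TB ((1 - t) • z + δ) (B ⟨TA (t • z + δ) x, hyB⟩)
        = deriv TB ((1 - t) • z + δ) (TA (t • z + δ) x) :=
      aux_gen_commute hB hTBsg hw1 hdB ⟨_, hyB⟩
    have hCy : C (TA (t • z + δ) x)
        = deriv TA (t • z + δ) x - B ⟨TA (t • z + δ) x, hyB⟩ := by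
      rw [hC _ hy hyB, hAy]
    convert hF using 1
    · rfl
    rw [hCy, map_sub, hBcomm]
    simp only [ContinuousLinearMap.coe_restrictScalars', ContinuousLinearMap.smul_apply,
      ContinuousLinearMap.neg_apply, neg_smul, smul_sub,
      (TB ((1 - t) • z + (δ:ℂ))).map_smul]
    abel
  have hcint : ContinuousOn
      (fun t : ℝ => z • TB ((1 - t) • z + δ) (C (TA (t • z + δ) x))) (Icc 0 1) := by
    have cw1 : Continuous (fun t : ℝ => ((1 - t) • z + (δ:ℂ))) := by fun_prop
    have cw2 : Continuous (fun t : ℝ => ((t:ℝ) • z + (δ:ℂ))) := by fun_prop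
    have cB : ContinuousOn (fun t : ℝ => TB ((1 - t) • z + δ)) (Icc 0 1) :=
      hTBhol.continuousOn.comp cw1.continuousOn (fun t ht => hre1 t ht.2)
    have cA : ContinuousOn (fun t : ℝ => TA (t • z + δ)) (Icc 0 1) :=
      hTAhol.continuousOn.comp cw2.continuousOn (fun t ht => hre2 t ht.1)
    have cAx : ContinuousOn (fun t : ℝ => C (TA (t • z + δ) x)) (Icc 0 1) :=
      C.continuous.comp_continuousOn (cA.clm_apply continuousOn_const)
    exact (cB.clm_apply cAx).const_smul z
  have hint : IntervalIntegrable
      (fun t : ℝ => z • TB ((1 - t) • z + δ) (C (TA (t • z + δ) x))) volume 0 1 := by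
    apply ContinuousOn.intervalIntegrable
    rwa [uIcc_of_le zero_le_one]
  have hFTC := intervalIntegral.integral_eq_sub_of_hasDerivAt
    (f := fun s : ℝ => TB ((1 - s) • z + δ) (TA (s • z + δ) x))
    (fun t ht => hderiv t (by rwa [uIcc_of_le zero_le_one] at ht)) hint
  rw [intervalIntegral.integral_smul] at hFTC
  rw [hFTC]
  norm_num

open Complex in
/-- for commuting bounded holomorphic semigroups of polynomial
growth `M|ζ|^m` on `ℂ₊` whose generators differ by a bounded operator `C`,
`(T_A(z) − T_B(z))x = ∫_{[0,z]} T_B(z−s) C T_A(s) x ds` and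
`‖T_A(z) − T_B(z)‖ ≤ M²|z|^{2m+1}‖C‖`. -/
theorem holomorphic_semigroup_difference
    (TA TB : ℂ → X →L[ℂ] X) (m : ℕ) (M : ℝ)
    (hTA0 : IsC0 (fun t : ℝ => TA t)) (hTB0 : IsC0 (fun t : ℝ => TB t))
    (hTAhol : DifferentiableOn ℂ TA {z : ℂ | 0 < z.re})
    (hTBhol : DifferentiableOn ℂ TB {z : ℂ | 0 < z.re})
    (hTAsg : ∀ z w : ℂ, 0 < z.re → 0 < w.re → TA (z + w) = TA z ∘L TA w)
    (hTBsg : ∀ z w : ℂ, 0 < z.re → 0 < w.re → TB (z + w) = TB z ∘L TB w)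
    (hMA : ∀ z : ℂ, 0 < z.re → ‖TA z‖ ≤ M * ‖z‖ ^ m)
    (hMB : ∀ z : ℂ, 0 < z.re → ‖TB z‖ ≤ M * ‖z‖ ^ m)
    (hcomm : ∀ z w : ℂ, TA z ∘L TB w = TB w ∘L TA z)
    (A B : X →ₗ.[ℂ] X) (hA : IsGen (fun t : ℝ => TA t) A)
    (hB : IsGen (fun t : ℝ => TB t) B)
    (hdom : A.domain = B.domain)
    (C : X →L[ℂ] X)
    (hC : ∀ x (hxA : x ∈ A.domain) (hxB : x ∈ B.domain),
      C x = A ⟨x, hxA⟩ - B ⟨x, hxB⟩)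
    (z : ℂ) (hz : 0 < z.re) :
    (∀ x : X,
      TA z x - TB z x =
        z • ∫ t in (0:ℝ)..1, TB ((1 - t) • z) (C (TA (t • z) x))) ∧
    ‖TA z - TB z‖ ≤ M ^ 2 * ‖z‖ ^ (2 * m + 1) * ‖C‖ := by
  have hzne : z ≠ 0 := by
    intro h; rw [h] at hz; simp at hz
  have habs : 0 < ‖z‖ := norm_pos_iff.2 hzne
  have hM0 : 0 ≤ M := by
    have h1 := hMA z hz
    have h2 : (0:ℝ) < ‖z‖ ^ m := pow_pos habs m
    nlinarith [norm_nonneg (TA z)]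
  -- abs bounds for shifted arguments
  have habs1 : ∀ t : ℝ, 0 ≤ t → t ≤ 1 → ∀ δ : ℝ, 0 < δ → δ ≤ 1 →
      ‖t • z + (δ:ℂ)‖ ≤ ‖z‖ + 1 := by
    intro t ht0 ht1 δ hδ0 hδ1
    calc ‖t • z + (δ:ℂ)‖ ≤ ‖t • z‖ + ‖(δ:ℂ)‖ :=
          norm_add_le _ _
      _ = |t| * ‖z‖ + |δ| := by
          rw [Complex.norm_real, norm_smul, Real.norm_eq_abs, Real.norm_eq_abs]
      _ ≤ 1 * ‖z‖ + 1 := by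
          have h1 : |t| ≤ 1 := abs_le.2 ⟨by linarith, ht1⟩
          have h2 : |δ| ≤ 1 := abs_le.2 ⟨by linarith, hδ1⟩
          have := norm_nonneg z
          nlinarith
      _ = ‖z‖ + 1 := by ring
  have hbndB : ∀ t : ℝ, 0 ≤ t → t ≤ 1 → ∀ δ : ℝ, 0 < δ → δ ≤ 1 →
      ‖TB (t • z + (δ:ℂ))‖ ≤ M * (‖z‖ + 1) ^ m := by
    intro t ht0 ht1 δ hδ0 hδ1
    have hre : 0 < (t • z + (δ:ℂ)).re := by
      simp only [Complex.add_re, Complex.smul_re, Complex.ofReal_re, smul_eq_mul]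
      nlinarith
    refine (hMB _ hre).trans ?_
    have h1 := pow_le_pow_left₀ (norm_nonneg _) (habs1 t ht0 ht1 δ hδ0 hδ1) m
    exact mul_le_mul_of_nonneg_left h1 hM0
  have hbndA : ∀ t : ℝ, 0 ≤ t → t ≤ 1 → ∀ δ : ℝ, 0 < δ → δ ≤ 1 →
      ‖TA (t • z + (δ:ℂ))‖ ≤ M * (‖z‖ + 1) ^ m := by
    intro t ht0 ht1 δ hδ0 hδ1
    have hre : 0 < (t • z + (δ:ℂ)).re := by
      simp only [Complex.add_re, Complex.smul_re, Complex.ofReal_re, smul_eq_mul]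
      nlinarith
    refine (hMA _ hre).trans ?_
    have h1 := pow_le_pow_left₀ (norm_nonneg _) (habs1 t ht0 ht1 δ hδ0 hδ1) m
    exact mul_le_mul_of_nonneg_left h1 hM0
  have hδcast : ∀ w : ℂ, Tendsto (fun δ : ℝ => w + (δ:ℂ)) (nhdsWithin 0 (Set.Ioi 0)) (nhds w) := by
    intro w
    have h : Tendsto (fun δ : ℝ => w + (δ:ℂ)) (nhds 0) (nhds (w + ((0:ℝ):ℂ))) :=
      (continuous_const.add Complex.continuous_ofReal).tendsto 0
    simpa using h.mono_left nhdsWithin_le_nhds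
  have hne1 : ∀ᵐ t : ℝ ∂MeasureTheory.volume, t ≠ (1:ℝ) := by
    rw [ae_iff]
    simpa [not_not, setOf_eq_eq_singleton] using measure_singleton (1:ℝ)
  have main : ∀ x : X, TA z x - TB z x
      = z • ∫ t in (0:ℝ)..1, TB ((1 - t) • z) (C (TA (t • z) x)) := by
    intro x
    have hTAz : ContinuousAt TA z := (hTAhol.differentiableAt (aux_open.mem_nhds hz)).continuousAt
    have hTBz : ContinuousAt TB z := (hTBhol.differentiableAt (aux_open.mem_nhds hz)).continuousAt
    have eA : Tendsto (fun δ : ℝ => TA (z + δ)) (nhdsWithin 0 (Set.Ioi 0)) (nhds (TA z)) :=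
      hTAz.tendsto.comp (hδcast z)
    have eB : Tendsto (fun δ : ℝ => TB (z + δ)) (nhdsWithin 0 (Set.Ioi 0)) (nhds (TB z)) :=
      hTBz.tendsto.comp (hδcast z)
    have eAx : Tendsto (fun δ : ℝ => TA (z + δ) x) (nhdsWithin 0 (Set.Ioi 0)) (nhds (TA z x)) :=
      ((ContinuousLinearMap.apply ℂ X x).continuous.tendsto _).comp eA
    -- strong continuity at 0
    have eTAδ : ∀ v : X, Tendsto (fun δ : ℝ => TA δ v) (nhdsWithin 0 (Set.Ioi 0)) (nhds v) := by
      intro v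
      have h1 : ContinuousWithinAt (fun t : ℝ => TA t v) (Set.Ici 0) 0 :=
        (hTA0.2.2 v) 0 Set.self_mem_Ici
      have h2 := h1.tendsto.mono_left (nhdsWithin_mono 0 Set.Ioi_subset_Ici_self)
      have h3 : TA (0:ℂ) = 1 := by
        have := hTA0.1
        simpa using this
      simpa [h3] using h2
    have eTBδ : ∀ v : X, Tendsto (fun δ : ℝ => TB δ v) (nhdsWithin 0 (Set.Ioi 0)) (nhds v) := by
      intro v
      have h1 : ContinuousWithinAt (fun t : ℝ => TB t v) (Set.Ici 0) 0 :=
        (hTB0.2.2 v) 0 Set.self_mem_Ici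
      have h2 := h1.tendsto.mono_left (nhdsWithin_mono 0 Set.Ioi_subset_Ici_self)
      have h3 : TB (0:ℂ) = 1 := by
        have := hTB0.1
        simpa using this
      simpa [h3] using h2
    -- first term limit
    have eZero1 : Tendsto (fun δ : ℝ => TB δ (TA (z + δ) x) - TB δ (TA z x))
        (nhdsWithin 0 (Set.Ioi 0)) (nhds 0) := by
      have hg : Tendsto (fun δ : ℝ => M * ‖TA (z + δ) x - TA z x‖)
          (nhdsWithin 0 (Set.Ioi 0)) (nhds 0) := by
        have := ((eAx.sub (tendsto_const_nhds (x := TA z x))).norm).const_mul M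
        simpa using this
      refine squeeze_zero_norm' ?_ hg
      filter_upwards [Ioc_mem_nhdsGT_of_mem ⟨le_refl (0:ℝ), zero_lt_one⟩] with δ hδ
      have hre : 0 < ((δ:ℝ):ℂ).re := by simpa using hδ.1
      have hTBbnd : ‖TB δ‖ ≤ M := by
        refine (hMB _ hre).trans ?_
        have h1 : ‖((δ:ℝ):ℂ)‖ ^ m ≤ 1 := by
          refine pow_le_one₀ (norm_nonneg _) ?_
          rw [Complex.norm_real, Real.norm_eq_abs]
          exact abs_le.2 ⟨by linarith [hδ.1], hδ.2⟩
        nlinarith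
      calc ‖TB δ (TA (z + δ) x) - TB δ (TA z x)‖
          = ‖TB δ (TA (z + δ) x - TA z x)‖ := by rw [map_sub]
        _ ≤ ‖TB δ‖ * ‖TA (z + δ) x - TA z x‖ := (TB δ).le_opNorm _
        _ ≤ M * ‖TA (z + δ) x - TA z x‖ :=
            mul_le_mul_of_nonneg_right hTBbnd (norm_nonneg _)
    have e3 : Tendsto (fun δ : ℝ => TB δ (TA (z + δ) x))
        (nhdsWithin 0 (Set.Ioi 0)) (nhds (TA z x)) := by
      have := eZero1.add (eTBδ (TA z x))
      simp only [zero_add] at this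
      refine this.congr ?_
      intro δ; abel
    -- second term limit
    have eZero2 : Tendsto (fun δ : ℝ => TB (z + δ) (TA δ x) - TB (z + δ) x)
        (nhdsWithin 0 (Set.Ioi 0)) (nhds 0) := by
      have hg : Tendsto (fun δ : ℝ => M * (‖z‖ + 1) ^ m * ‖TA δ x - x‖)
          (nhdsWithin 0 (Set.Ioi 0)) (nhds 0) := by
        have := (((eTAδ x).sub (tendsto_const_nhds (x := x))).norm).const_mul (M * (‖z‖ + 1) ^ m)
        simpa using this
      refine squeeze_zero_norm' ?_ hg
      filter_upwards [Ioc_mem_nhdsGT_of_mem ⟨le_refl (0:ℝ), zero_lt_one⟩] with δ hδ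
      have hbnd : ‖TB (z + δ)‖ ≤ M * (‖z‖ + 1) ^ m := by
        have := hbndB 1 zero_le_one le_rfl δ hδ.1 hδ.2
        simpa using this
      calc ‖TB (z + δ) (TA δ x) - TB (z + δ) x‖
          = ‖TB (z + δ) (TA δ x - x)‖ := by rw [map_sub]
        _ ≤ ‖TB (z + δ)‖ * ‖TA δ x - x‖ := (TB (z + δ)).le_opNorm _
        _ ≤ M * (‖z‖ + 1) ^ m * ‖TA δ x - x‖ :=
            mul_le_mul_of_nonneg_right hbnd (norm_nonneg _)
    have eBx : Tendsto (fun δ : ℝ => TB (z + δ) x) (nhdsWithin 0 (Set.Ioi 0)) (nhds (TB z x)) :=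
      ((ContinuousLinearMap.apply ℂ X x).continuous.tendsto _).comp eB
    have e5 : Tendsto (fun δ : ℝ => TB (z + δ) (TA δ x))
        (nhdsWithin 0 (Set.Ioi 0)) (nhds (TB z x)) := by
      have := eZero2.add eBx
      simp only [zero_add] at this
      refine this.congr ?_
      intro δ; abel
    have hL : Tendsto (fun δ : ℝ => TB δ (TA (z + δ) x) - TB (z + δ) (TA δ x))
        (nhdsWithin 0 (Set.Ioi 0)) (nhds (TA z x - TB z x)) := e3.sub e5
    -- dominated convergence for the integrals
    have hR : Tendsto
        (fun δ : ℝ => ∫ t in (0:ℝ)..1, TB ((1 - t) • z + δ) (C (TA (t • z + δ) x)))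
        (nhdsWithin 0 (Set.Ioi 0))
        (nhds (∫ t in (0:ℝ)..1, TB ((1 - t) • z) (C (TA (t • z) x)))) := by
      apply intervalIntegral.tendsto_integral_filter_of_dominated_convergence
        (bound := fun _ => M * (‖z‖ + 1) ^ m *
          (‖C‖ * (M * (‖z‖ + 1) ^ m * ‖x‖)))
      · filter_upwards [self_mem_nhdsWithin] with δ hδ
        have hδ0 : (0:ℝ) < δ := hδ
        apply ContinuousOn.aestronglyMeasurable ?_ measurableSet_uIoc
        rw [Set.uIoc_of_le (zero_le_one : (0:ℝ) ≤ 1)]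
        have cw1 : Continuous (fun t : ℝ => ((1 - t) • z + (δ:ℂ))) := by fun_prop
        have cw2 : Continuous (fun t : ℝ => ((t:ℝ) • z + (δ:ℂ))) := by fun_prop
        have cB : ContinuousOn (fun t : ℝ => TB ((1 - t) • z + δ)) (Set.Ioc 0 1) := by
          refine hTBhol.continuousOn.comp cw1.continuousOn ?_
          intro t ht
          simp only [Set.mem_setOf_eq, Complex.add_re, Complex.smul_re, Complex.ofReal_re,
            smul_eq_mul]
          nlinarith [ht.2, hz]
        have cA : ContinuousOn (fun t : ℝ => TA (t • z + δ)) (Set.Ioc 0 1) := by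
          refine hTAhol.continuousOn.comp cw2.continuousOn ?_
          intro t ht
          simp only [Set.mem_setOf_eq, Complex.add_re, Complex.smul_re, Complex.ofReal_re,
            smul_eq_mul]
          nlinarith [ht.1, hz]
        have cAx : ContinuousOn (fun t : ℝ => C (TA (t • z + δ) x)) (Set.Ioc 0 1) :=
          C.continuous.comp_continuousOn (cA.clm_apply continuousOn_const)
        exact cB.clm_apply cAx
      · filter_upwards [Ioc_mem_nhdsGT_of_mem ⟨le_refl (0:ℝ), zero_lt_one⟩] with δ hδ
        refine Filter.Eventually.of_forall ?_
        intro t ht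
        rw [Set.uIoc_of_le (zero_le_one : (0:ℝ) ≤ 1)] at ht
        have h1t : (0:ℝ) ≤ 1 - t := by linarith [ht.2]
        have hB1 : ‖TB ((1 - t) • z + δ)‖ ≤ M * (‖z‖ + 1) ^ m :=
          hbndB (1 - t) h1t (by linarith [ht.1]) δ hδ.1 hδ.2
        have hA1 : ‖TA (t • z + δ)‖ ≤ M * (‖z‖ + 1) ^ m :=
          hbndA t (le_of_lt ht.1) ht.2 δ hδ.1 hδ.2
        calc ‖TB ((1 - t) • z + δ) (C (TA (t • z + δ) x))‖
            ≤ ‖TB ((1 - t) • z + δ)‖ * ‖C (TA (t • z + δ) x)‖ :=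
              (TB _).le_opNorm _
          _ ≤ ‖TB ((1 - t) • z + δ)‖ * (‖C‖ * (‖TA (t • z + δ)‖ * ‖x‖)) := by
              refine mul_le_mul_of_nonneg_left ?_ (norm_nonneg _)
              refine (C.le_opNorm _).trans ?_
              exact mul_le_mul_of_nonneg_left ((TA _).le_opNorm _) (norm_nonneg _)
          _ ≤ M * (‖z‖ + 1) ^ m * (‖C‖ * (M * (‖z‖ + 1) ^ m * ‖x‖)) := by
              have hK : (0:ℝ) ≤ M * (‖z‖ + 1) ^ m := mul_nonneg hM0 (by positivity)
              refine mul_le_mul hB1 ?_ (by positivity) hK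
              exact mul_le_mul_of_nonneg_left
                (mul_le_mul_of_nonneg_right hA1 (norm_nonneg _)) (norm_nonneg _)
      · exact intervalIntegrable_const
      · filter_upwards [hne1] with t hne ht
        rw [Set.uIoc_of_le (zero_le_one : (0:ℝ) ≤ 1)] at ht
        have ht0 : 0 < t := ht.1
        have ht1 : t < 1 := lt_of_le_of_ne ht.2 hne
        have hw1 : 0 < ((1 - t) • z).re := by
          simp only [Complex.smul_re, smul_eq_mul]
          nlinarith
        have hw2 : 0 < ((t:ℝ) • z).re := by
          simp only [Complex.smul_re, smul_eq_mul]
          nlinarith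
        have cB : ContinuousAt TB ((1 - t) • z) :=
          (hTBhol.differentiableAt (aux_open.mem_nhds hw1)).continuousAt
        have cA : ContinuousAt TA ((t:ℝ) • z) :=
          (hTAhol.differentiableAt (aux_open.mem_nhds hw2)).continuousAt
        have opT : Tendsto (fun δ : ℝ => TB ((1 - t) • z + δ)) (nhdsWithin 0 (Set.Ioi 0))
            (nhds (TB ((1 - t) • z))) := cB.tendsto.comp (hδcast _)
        have vecT : Tendsto (fun δ : ℝ => C (TA (t • z + δ) x)) (nhdsWithin 0 (Set.Ioi 0))
            (nhds (C (TA (t • z) x))) :=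
          (C.continuous.tendsto _).comp
            (((ContinuousLinearMap.apply ℂ X x).continuous.tendsto _).comp
              (cA.tendsto.comp (hδcast _)))
        exact (isBoundedBilinearMap_apply.continuous.tendsto _).comp (opT.prodMk_nhds vecT)
    have hRe : ∀ᶠ δ : ℝ in nhdsWithin 0 (Set.Ioi 0),
        TB δ (TA (z + δ) x) - TB (z + δ) (TA δ x)
          = z • ∫ t in (0:ℝ)..1, TB ((1 - t) • z + δ) (C (TA (t • z + δ) x)) := by
      filter_upwards [self_mem_nhdsWithin] with δ hδ
      exact aux_key TA TB hTAhol hTBhol hTAsg hTBsg A B hA hB hdom C hC z hz δ hδ x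
    have hRz := hR.const_smul z
    exact tendsto_nhds_unique (hL.congr' hRe) hRz
  refine ⟨main, ?_⟩
  -- norm estimate
  have hb : ∀ x : X, ‖(TA z - TB z) x‖ ≤ M ^ 2 * ‖z‖ ^ (2 * m + 1) * ‖C‖ * ‖x‖ := by
    intro x
    rw [ContinuousLinearMap.sub_apply, main x, norm_smul]
    have hintbnd : ‖∫ t in (0:ℝ)..1, TB ((1 - t) • z) (C (TA (t • z) x))‖
        ≤ M * ‖z‖ ^ m * (‖C‖ * (M * ‖z‖ ^ m * ‖x‖)) := by
      rw [intervalIntegral.integral_of_le (zero_le_one : (0:ℝ) ≤ 1),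
        MeasureTheory.integral_Ioc_eq_integral_Ioo]
      have hmeas : AEStronglyMeasurable
          (fun t : ℝ => TB ((1 - t) • z) (C (TA (t • z) x)))
          (MeasureTheory.volume.restrict (Set.Ioo (0:ℝ) 1)) := by
        apply ContinuousOn.aestronglyMeasurable ?_ measurableSet_Ioo
        have cw1 : Continuous (fun t : ℝ => ((1 - t) • z)) := by fun_prop
        have cw2 : Continuous (fun t : ℝ => ((t:ℝ) • z)) := by fun_prop
        have cB : ContinuousOn (fun t : ℝ => TB ((1 - t) • z)) (Set.Ioo (0:ℝ) 1) := by
          refine hTBhol.continuousOn.comp cw1.continuousOn ?_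
          intro t ht
          simp only [Set.mem_setOf_eq, Complex.smul_re, smul_eq_mul]
          nlinarith [ht.2, hz]
        have cA : ContinuousOn (fun t : ℝ => TA (t • z)) (Set.Ioo (0:ℝ) 1) := by
          refine hTAhol.continuousOn.comp cw2.continuousOn ?_
          intro t ht
          simp only [Set.mem_setOf_eq, Complex.smul_re, smul_eq_mul]
          nlinarith [ht.1, hz]
        have cAx : ContinuousOn (fun t : ℝ => C (TA (t • z) x)) (Set.Ioo (0:ℝ) 1) :=
          C.continuous.comp_continuousOn (cA.clm_apply continuousOn_const)
        exact cB.clm_apply cAx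
      have hvol : MeasureTheory.volume (Set.Ioo (0:ℝ) 1) < ⊤ := by
        rw [Real.volume_Ioo]; exact ENNReal.ofReal_lt_top
      have hptw : ∀ t ∈ Set.Ioo (0:ℝ) 1,
          ‖TB ((1 - t) • z) (C (TA (t • z) x))‖
            ≤ M * ‖z‖ ^ m * (‖C‖ * (M * ‖z‖ ^ m * ‖x‖)) := by
        intro t ht
        have ht0 := ht.1
        have ht1 := ht.2
        have habsB : ‖(1 - t) • z‖ ≤ ‖z‖ := by
          rw [norm_smul, Real.norm_eq_abs]
          have : |1 - t| ≤ 1 := abs_le.2 ⟨by linarith, by linarith⟩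
          nlinarith [norm_nonneg z]
        have habsA : ‖(t:ℝ) • z‖ ≤ ‖z‖ := by
          rw [norm_smul, Real.norm_eq_abs]
          have : |t| ≤ 1 := abs_le.2 ⟨by linarith, by linarith⟩
          nlinarith [norm_nonneg z]
        have hreB : 0 < ((1 - t) • z).re := by
          simp only [Complex.smul_re, smul_eq_mul]; nlinarith
        have hreA : 0 < ((t:ℝ) • z).re := by
          simp only [Complex.smul_re, smul_eq_mul]; nlinarith
        have hB1 : ‖TB ((1 - t) • z)‖ ≤ M * ‖z‖ ^ m := by
          refine (hMB _ hreB).trans ?_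
          exact mul_le_mul_of_nonneg_left
            (pow_le_pow_left₀ (norm_nonneg _) habsB m) hM0
        have hA1 : ‖TA ((t:ℝ) • z)‖ ≤ M * ‖z‖ ^ m := by
          refine (hMA _ hreA).trans ?_
          exact mul_le_mul_of_nonneg_left
            (pow_le_pow_left₀ (norm_nonneg _) habsA m) hM0
        calc ‖TB ((1 - t) • z) (C (TA (t • z) x))‖
            ≤ ‖TB ((1 - t) • z)‖ * ‖C (TA (t • z) x)‖ := (TB _).le_opNorm _
          _ ≤ ‖TB ((1 - t) • z)‖ * (‖C‖ * (‖TA ((t:ℝ) • z)‖ * ‖x‖)) := by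
              refine mul_le_mul_of_nonneg_left ?_ (norm_nonneg _)
              refine (C.le_opNorm _).trans ?_
              exact mul_le_mul_of_nonneg_left ((TA _).le_opNorm _) (norm_nonneg _)
          _ ≤ M * ‖z‖ ^ m * (‖C‖ * (M * ‖z‖ ^ m * ‖x‖)) := by
              have hK : (0:ℝ) ≤ M * ‖z‖ ^ m := mul_nonneg hM0 (by positivity)
              refine mul_le_mul hB1 ?_ (by positivity) hK
              exact mul_le_mul_of_nonneg_left
                (mul_le_mul_of_nonneg_right hA1 (norm_nonneg _)) (norm_nonneg _)
      have := MeasureTheory.norm_setIntegral_le_of_norm_le_const hvol hptw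
      simpa [Real.volume_Ioo, Measure.real] using this
    calc ‖z‖ * ‖∫ t in (0:ℝ)..1, TB ((1 - t) • z) (C (TA (t • z) x))‖
        ≤ ‖z‖ * (M * ‖z‖ ^ m * (‖C‖ * (M * ‖z‖ ^ m * ‖x‖))) :=
          mul_le_mul_of_nonneg_left hintbnd (norm_nonneg _)
      _ = M ^ 2 * ‖z‖ ^ (2 * m + 1) * ‖C‖ * ‖x‖ := by
          ring
  refine ContinuousLinearMap.opNorm_le_bound _ ?_ hb
  positivity
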